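/- Let a > 0 and b > 0 with 3a - 4b ≠ 0 and 3a² - 4ab + 4 ≥ 0, and set R1 = √(3a² - 4ab + 4), R2 = 4ab² - 7a²b + 3a³ + 2a. Assume (b·R1 - 2b)/(3a - 4b) ≥ 0, b(4b - 3a)/(2 - R1) ≥ 0, 2 - R1 ≠ 0 and (4b-3a)R1 - 8b + 6a ≠ 0, and define x* = √((b·R1 - 2b)/(3a - 4b)), y* = √(b(4b - 3a)/(2 - R1)), z* = (a·R1 - R2)/((4b-3a)R1 - 8b + 6a). Then both points X3* = (-x*, y*, z*) and X4* = (x*, -y*, z*) are zeros of the Rabinovich–Fabrikant vector field f. -/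

import Mathlib

/-- For suitable parameters, the points `X₃* = (-x*, y*, z*)` and `X₄* = (x*, -y*, z*)`
are zeros of the Rabinovich–Fabrikant vector field. -/
theorem rf_equilibria_34 (a b R1 R2 xs ys zs : ℝ)
    (ha : 0 < a) (hb : 0 < b) (h3a4b : 3 * a - 4 * b ≠ 0)
    (hdisc : 0 ≤ 3 * a ^ 2 - 4 * a * b + 4)
    (hR1 : R1 = Real.sqrt (3 * a ^ 2 - 4 * a * b + 4))
    (hR2 : R2 = 4 * a * b ^ 2 - 7 * a ^ 2 * b + 3 * a ^ 3 + 2 * a)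
    (hx_nonneg : 0 ≤ (b * R1 - 2 * b) / (3 * a - 4 * b))
    (hy_nonneg : 0 ≤ b * (4 * b - 3 * a) / (2 - R1))
    (hR1ne2 : 2 - R1 ≠ 0)
    (hden : (4 * b - 3 * a) * R1 - 8 * b + 6 * a ≠ 0)
    (hxs : xs = Real.sqrt ((b * R1 - 2 * b) / (3 * a - 4 * b)))
    (hys : ys = Real.sqrt (b * (4 * b - 3 * a) / (2 - R1)))
    (hzs : zs = (a * R1 - R2) / ((4 * b - 3 * a) * R1 - 8 * b + 6 * a))
    (f : ℝ → ℝ → ℝ → ℝ × ℝ × ℝ)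
    (hf : ∀ x1 x2 x3 : ℝ,
      f x1 x2 x3 = (x2 * (x3 - 1 + x1 ^ 2) + a * x1,
        x1 * (3 * x3 + 1 - x1 ^ 2) + a * x2,
        -2 * x3 * (b + x1 * x2))) :
    f (-xs) ys zs = ((0 : ℝ), (0 : ℝ), (0 : ℝ)) ∧
      f xs (-ys) zs = ((0 : ℝ), (0 : ℝ), (0 : ℝ)) := by
  have hr : R1 ^ 2 = 3 * a ^ 2 - 4 * a * b + 4 := by
    rw [hR1, Real.sq_sqrt hdisc]
  have hX : xs ^ 2 = (b * R1 - 2 * b) / (3 * a - 4 * b) := by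
    rw [hxs, Real.sq_sqrt hx_nonneg]
  have hY : ys ^ 2 = b * (4 * b - 3 * a) / (2 - R1) := by
    rw [hys, Real.sq_sqrt hy_nonneg]
  have hxs0 : 0 ≤ xs := hxs ▸ Real.sqrt_nonneg _
  have hys0 : 0 ≤ ys := hys ▸ Real.sqrt_nonneg _
  have hxy : xs * ys = b := by
    have hsq : (xs * ys) ^ 2 = b ^ 2 := by
      rw [mul_pow, hX, hY]
      rw [div_mul_div_comm, div_eq_iff (mul_ne_zero h3a4b hR1ne2)]
      ring
    calc xs * ys = Real.sqrt ((xs * ys) ^ 2) := (Real.sqrt_sq (by positivity)).symm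
      _ = Real.sqrt (b ^ 2) := by rw [hsq]
      _ = b := Real.sqrt_sq hb.le
  have hxne : xs ≠ 0 := by
    intro h; rw [h, zero_mul] at hxy; exact hb.ne hxy
  have hA : xs ^ 2 * (3 * a - 4 * b) = b * R1 - 2 * b := by
    rw [hX]; exact div_mul_cancel₀ _ h3a4b
  have hB : zs * ((4 * b - 3 * a) * R1 - 8 * b + 6 * a)
      = a * R1 - (4 * a * b ^ 2 - 7 * a ^ 2 * b + 3 * a ^ 3 + 2 * a) := by
    rw [hzs, hR2]; exact div_mul_cancel₀ _ hden
  have h1 : b * (zs - 1 + xs ^ 2) = a * xs ^ 2 := by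
    have h1d : (b * (zs - 1 + xs ^ 2) - a * xs ^ 2)
        * ((4 * b - 3 * a) * R1 - 8 * b + 6 * a) = 0 := by
      linear_combination b * hB + (a - b) * (R1 - 2) * hA + (a * b - b ^ 2) * hr
    rcases mul_eq_zero.mp h1d with h | h
    · linarith
    · exact absurd h hden
  have h2 : xs ^ 2 * (3 * zs + 1 - xs ^ 2) = a * b := by
    have h2d : (xs ^ 2 * (3 * zs + 1 - xs ^ 2) - a * b)
        * (((4 * b - 3 * a) * R1 - 8 * b + 6 * a) * (3 * a - 4 * b) ^ 2) = 0 := by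
      linear_combination (3 * xs ^ 2 * (3 * a - 4 * b) ^ 2) * hB
        + (16 * b ^ 2 - 32 * b ^ 2 * xs ^ 2 + 16 * b ^ 2 * R1 * xs ^ 2
          - 4 * b ^ 2 * R1 ^ 2 - 12 * a * b + 48 * a * b * xs ^ 2
          - 24 * a * b * R1 * xs ^ 2 + 3 * a * b * R1 ^ 2 + 48 * a * b ^ 3
          - 18 * a ^ 2 * xs ^ 2 + 9 * a ^ 2 * R1 * xs ^ 2 - 120 * a ^ 2 * b ^ 2
          + 99 * a ^ 3 * b - 27 * a ^ 4) * hA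
        + (8 * b ^ 3 - 4 * b ^ 3 * R1 - 6 * a * b ^ 2 + 3 * a * b ^ 2 * R1) * hr
    rcases mul_eq_zero.mp h2d with h | h
    · linarith
    · exact absurd h (mul_ne_zero hden (pow_ne_zero 2 h3a4b))
  have e1 : ys * (zs - 1 + xs ^ 2) = a * xs := by
    refine mul_left_cancel₀ hxne ?_
    calc xs * (ys * (zs - 1 + xs ^ 2)) = (xs * ys) * (zs - 1 + xs ^ 2) := by ring
      _ = b * (zs - 1 + xs ^ 2) := by rw [hxy]
      _ = a * xs ^ 2 := h1
      _ = xs * (a * xs) := by ring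
  have e2 : xs * (3 * zs + 1 - xs ^ 2) = a * ys := by
    refine mul_left_cancel₀ hxne ?_
    calc xs * (xs * (3 * zs + 1 - xs ^ 2)) = xs ^ 2 * (3 * zs + 1 - xs ^ 2) := by ring
      _ = a * b := h2
      _ = a * (xs * ys) := by rw [hxy]
      _ = xs * (a * ys) := by ring
  constructor <;> rw [hf] <;> simp only [Prod.mk.injEq] <;> refine ⟨?_, ?_, ?_⟩
  · linear_combination e1
  · linear_combination -e2
  · linear_combination 2 * zs * hxy
  · linear_combination -e1
  · linear_combination e2
  · linear_combination 2 * zs * hxy
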